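/- Suppose ||λ(t+1) - λ*||² ≤ ||λ(t) - λ*||² + (2/V)(d(λ(t)) - d(λ*)) + 2C/V² holds, and d satisfies the locally-polyhedral bound d(λ*) ≥ d(λ) + L_p||λ - λ*|| for all λ ∈ Π. Then whenever ||λ(t) - λ*|| ≥ max(L_p/(2V), 2C/(V L_p)), it follows that ||λ(t+1) - λ*|| ≤ ||λ(t) - λ*|| - L_p/(2V). -/
import Mathlib

theorem stmt_9 (n : ℕ) (V C Lp : ℝ) (hV : 0 < V) (hC : 0 < C) (hLp : 0 < Lp)
    (Pi : Set (EuclideanSpace ℝ (Fin n))) (d : EuclideanSpace ℝ (Fin n) → ℝ)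
    (lam lam' lamstar : EuclideanSpace ℝ (Fin n))
    (hlam : lam ∈ Pi) (hlamstar : lamstar ∈ Pi)
    (hrec : ‖lam' - lamstar‖ ^ 2 ≤ ‖lam - lamstar‖ ^ 2 +
        (2 / V) * (d lam - d lamstar) + 2 * C / V ^ 2)
    (hpoly : ∀ μ ∈ Pi, d lamstar ≥ d μ + Lp * ‖μ - lamstar‖)
    (hfar : ‖lam - lamstar‖ ≥ max (Lp / (2 * V)) (2 * C / (V * Lp))) :
    ‖lam' - lamstar‖ ≤ ‖lam - lamstar‖ - Lp / (2 * V) := by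
  set r := ‖lam - lamstar‖
  set r' := ‖lam' - lamstar‖
  have h1 : d lam - d lamstar ≤ -(Lp * r) := by
    have := hpoly lam hlam; linarith
  have hr1 : r ≥ Lp / (2 * V) := le_trans (le_max_left _ _) hfar
  have hr2 : r ≥ 2 * C / (V * Lp) := le_trans (le_max_right _ _) hfar
  have key : 2 * C ≤ V * Lp * r := by
    rw [ge_iff_le, div_le_iff₀ (by positivity)] at hr2; nlinarith
  have hsq : r' ^ 2 ≤ (r - Lp / (2 * V)) ^ 2 := by
    have e1 : (2 / V) * (d lam - d lamstar) ≤ (2 / V) * (-(Lp * r)) := by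
      apply mul_le_mul_of_nonneg_left h1; positivity
    have e2 : 2 * C / V ^ 2 ≤ Lp * r / V := by
      rw [div_le_div_iff₀ (by positivity) hV]
      nlinarith [mul_le_mul_of_nonneg_right key (le_of_lt hV)]
    have e3 : (0:ℝ) ≤ Lp ^ 2 / (4 * V ^ 2) := by positivity
    have expand : (r - Lp / (2 * V)) ^ 2 = r ^ 2 - Lp * r / V + Lp ^ 2 / (4 * V ^ 2) := by
      field_simp; ring
    have e4 : (2 / V) * (-(Lp * r)) = -(Lp * r / V) - Lp * r / V := by
      field_simp; ring
    rw [expand]; linarith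
  have hr'nn : 0 ≤ r' := norm_nonneg _
  have hrn : 0 ≤ r - Lp / (2 * V) := by linarith
  exact (pow_le_pow_iff_left₀ hr'nn hrn two_ne_zero).mp hsq
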